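/- Let H ⊂ ℝᴺ be an open affine half space with reflection Q at ∂H (write x̄ = Q(x)). Let J be an even nonnegative kernel with J(x̄−ȳ) = J(x−y) for all x,y and J(x−y) ≥ J(x−ȳ) ≥ 0 for all x,y ∈ H. Let U′ be open with Q(U′) = U′ and let v ∈ L²(ℝᴺ) be antisymmetric (v∘Q = −v) with ρ(v,U′) < ∞. Then ρ(1_H·v, U′) ≤ ρ(v, U′), where ρ(w,U′) = ∬_{U′×U′} (w(x)−w(y))² J(x−y) dx dy. -/

import Mathlib

open MeasureTheory ENNReal Set
open scoped RealInnerProductSpace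

/-- The localized energy `ρ(w,U′)`. -/
noncomputable def rho (N : ℕ) (J : EuclideanSpace ℝ (Fin N) → ℝ)
    (U' : Set (EuclideanSpace ℝ (Fin N)))
    (w : EuclideanSpace ℝ (Fin N) → ℝ) : ℝ≥0∞ :=
  ∫⁻ x in U', ∫⁻ y in U', ENNReal.ofReal ((w x - w y) ^ 2 * J (x - y))

lemma core_ineq (α β γ s t : ℝ) (hβ0 : 0 ≤ β) (hγ0 : 0 ≤ γ) (hβ : β ≤ α) (hγ : γ ≤ α) :
    (s - t)^2*α + t^2*γ + s^2*β ≤ (s - t)^2*α + (s + t)^2*γ + (s + t)^2*β + (s - t)^2*α := by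
  nlinarith [mul_le_mul_of_nonneg_left hβ (sq_nonneg (s - t)),
    mul_le_mul_of_nonneg_left hγ (sq_nonneg (s - t)),
    mul_nonneg hβ0 (sq_nonneg (s + t)), mul_nonneg hγ0 (sq_nonneg (s + t)),
    mul_nonneg hβ0 (sq_nonneg t), mul_nonneg hγ0 (sq_nonneg s)]

lemma ofReal_add4_le {a1 a2 a3 a4 b1 b2 b3 b4 : ℝ} (h1 : 0 ≤ a1) (h2 : 0 ≤ a2) (h3 : 0 ≤ a3)
    (h4 : 0 ≤ a4) (h : a1 + a2 + a3 + a4 ≤ b1 + b2 + b3 + b4)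
    (g1 : 0 ≤ b1) (g2 : 0 ≤ b2) (g3 : 0 ≤ b3) (g4 : 0 ≤ b4) :
    ENNReal.ofReal a1 + ENNReal.ofReal a2 + ENNReal.ofReal a3 + ENNReal.ofReal a4 ≤
      ENNReal.ofReal b1 + ENNReal.ofReal b2 + ENNReal.ofReal b3 + ENNReal.ofReal b4 := by
  rw [← ENNReal.ofReal_add h1 h2, ← ENNReal.ofReal_add (by linarith) h3,
    ← ENNReal.ofReal_add (by linarith) h4,
    ← ENNReal.ofReal_add g1 g2, ← ENNReal.ofReal_add (by linarith) g3,
    ← ENNReal.ofReal_add (by linarith) g4]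
  exact ENNReal.ofReal_le_ofReal h

/-- `rho` only depends on the a.e. class of `w`. -/
lemma rho_congr_ae (N : ℕ) (J : EuclideanSpace ℝ (Fin N) → ℝ)
    (U' : Set (EuclideanSpace ℝ (Fin N))) {f g : EuclideanSpace ℝ (Fin N) → ℝ}
    (h : f =ᵐ[volume] g) : rho N J U' f = rho N J U' g := by
  unfold rho
  refine lintegral_congr_ae ?_
  filter_upwards [ae_restrict_of_ae h] with x hx
  refine lintegral_congr_ae ?_
  filter_upwards [ae_restrict_of_ae h] with y hy
  rw [hx, hy]

/-- Main inequality, for a measurable, everywhere antisymmetric `v`. -/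
lemma rho_indicator_le_aux
    (N : ℕ)
    (w₀ : EuclideanSpace ℝ (Fin N)) (a : ℝ) (hw₀ : ‖w₀‖ = 1)
    (H : Set (EuclideanSpace ℝ (Fin N)))
    (hH : H = {x | a < ⟪x, w₀⟫})
    (Q : EuclideanSpace ℝ (Fin N) → EuclideanSpace ℝ (Fin N))
    (hQ : ∀ x, Q x = x + (2 * (a - ⟪x, w₀⟫)) • w₀)
    (hQQ : ∀ x, Q (Q x) = x)
    (hQmeas : Measurable Q)
    (hQmp : MeasurePreserving Q volume volume)
    (J : EuclideanSpace ℝ (Fin N) → ℝ)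
    (hJmeas : Measurable J) (hJnonneg : ∀ z, 0 ≤ J z)
    (hJeven : ∀ z, J (-z) = J z)
    (hJQ : ∀ x y, J (Q x - Q y) = J (x - y))
    (hJmono : ∀ x ∈ H, ∀ y ∈ H, J (x - Q y) ≤ J (x - y))
    (U' : Set (EuclideanSpace ℝ (Fin N))) (hU'o : IsOpen U')
    (hU'sym : Q '' U' = U')
    (v : EuclideanSpace ℝ (Fin N) → ℝ)
    (hvmeas : Measurable v)
    (hvanti : ∀ x, v (Q x) = -v x) :
    rho N J U' (H.indicator v) ≤ rho N J U' v := by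
  have hU'm : MeasurableSet U' := hU'o.measurableSet
  set μ : Measure (EuclideanSpace ℝ (Fin N)) := volume.restrict U' with hμdef
  -- basic facts about Q, H, v
  have hinner : ∀ x, ⟪Q x, w₀⟫ = 2*a - ⟪x, w₀⟫ := by
    intro x
    rw [hQ, inner_add_left, real_inner_smul_left, real_inner_self_eq_norm_mul_norm, hw₀]
    ring
  have hmem : ∀ x : EuclideanSpace ℝ (Fin N), x ∈ H ↔ a < ⟪x, w₀⟫ := by intro x; rw [hH]; exact Iff.rfl
  have hQinj : Function.Injective Q := fun x y hxy => by
    have := congrArg Q hxy; rwa [hQQ, hQQ] at this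
  have hQpre : Q ⁻¹' U' = U' := by
    ext x
    simp only [mem_preimage]
    constructor
    · intro hx
      have hx' : Q x ∈ Q '' U' := hU'sym.symm ▸ hx
      rcases hx' with ⟨y, hy, hxy⟩
      exact hQinj hxy ▸ hy
    · intro hx
      have : Q x ∈ Q '' U' := ⟨x, hx, rfl⟩
      rwa [hU'sym] at this
  have hmap : μ.map Q = μ := by
    have h1 := Measure.restrict_map (μ := volume) hQmeas hU'm
    rw [hQmp.map_eq, hQpre] at h1
    exact h1.symm
  -- the reflection as a measurable equivalence
  let e : EuclideanSpace ℝ (Fin N) ≃ᵐ EuclideanSpace ℝ (Fin N) := ⟨⟨Q, Q, hQQ, hQQ⟩, hQmeas, hQmeas⟩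
  have hsub : ∀ f : EuclideanSpace ℝ (Fin N) → ℝ≥0∞, ∫⁻ x, f (Q x) ∂μ = ∫⁻ x, f x ∂μ := by
    intro f
    have h1 : ∫⁻ x, f x ∂(μ.map e) = ∫⁻ x, f (e x) ∂μ := lintegral_map_equiv f e
    have h2 : μ.map e = μ := by
      have : (⇑e : EuclideanSpace ℝ (Fin N) → EuclideanSpace ℝ (Fin N)) = Q := rfl
      rw [this, hmap]
    rw [h2] at h1
    exact h1.symm
  set w : EuclideanSpace ℝ (Fin N) → ℝ := H.indicator v with hwdef
  have hHm : MeasurableSet H := by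
    rw [hH]
    have : Continuous fun x : EuclideanSpace ℝ (Fin N) => ⟪x, w₀⟫ := continuous_id.inner continuous_const
    exact measurableSet_lt measurable_const this.measurable
  have hwmeas : Measurable w := hvmeas.indicator hHm
  set G : EuclideanSpace ℝ (Fin N) → EuclideanSpace ℝ (Fin N) → ℝ≥0∞ := fun x y => ENNReal.ofReal ((w x - w y) ^ 2 * J (x - y)) with hGdef
  set F : EuclideanSpace ℝ (Fin N) → EuclideanSpace ℝ (Fin N) → ℝ≥0∞ := fun x y => ENNReal.ofReal ((v x - v y) ^ 2 * J (x - y)) with hFdef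
  have hprodmeas : ∀ u : EuclideanSpace ℝ (Fin N) → ℝ, Measurable u →
      Measurable (Function.uncurry fun x y : EuclideanSpace ℝ (Fin N) =>
        ENNReal.ofReal ((u x - u y) ^ 2 * J (x - y))) := by
    intro u hu
    apply Measurable.ennreal_ofReal
    exact (((hu.comp measurable_fst).sub (hu.comp measurable_snd)).pow_const 2).mul
      (hJmeas.comp (measurable_fst.sub measurable_snd))
  have hGm : Measurable (Function.uncurry G) := hprodmeas w hwmeas
  have hFm : Measurable (Function.uncurry F) := hprodmeas v hvmeas
  -- invariance of the iterated integral under the three substitutions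
  have hsubst : ∀ K : EuclideanSpace ℝ (Fin N) → EuclideanSpace ℝ (Fin N) → ℝ≥0∞,
      (∫⁻ x, ∫⁻ y, (K x y + K (Q x) y + K x (Q y) + K (Q x) (Q y)) ∂μ ∂μ)
        = (∫⁻ x, ∫⁻ y, K x y ∂μ ∂μ) + (∫⁻ x, ∫⁻ y, K (Q x) y ∂μ ∂μ)
          + (∫⁻ x, ∫⁻ y, K x (Q y) ∂μ ∂μ) + (∫⁻ x, ∫⁻ y, K (Q x) (Q y) ∂μ ∂μ) →
      Measurable (Function.uncurry K) →
      (∫⁻ x, ∫⁻ y, (K x y + K (Q x) y + K x (Q y) + K (Q x) (Q y)) ∂μ ∂μ)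
        = 4 * ∫⁻ x, ∫⁻ y, K x y ∂μ ∂μ := by
    intro K hadd _
    have h1 : (∫⁻ x, ∫⁻ y, K (Q x) y ∂μ ∂μ) = ∫⁻ x, ∫⁻ y, K x y ∂μ ∂μ :=
      hsub (fun x => ∫⁻ y, K x y ∂μ)
    have h2 : (∫⁻ x, ∫⁻ y, K x (Q y) ∂μ ∂μ) = ∫⁻ x, ∫⁻ y, K x y ∂μ ∂μ :=
      lintegral_congr fun x => hsub (K x)
    have h3 : (∫⁻ x, ∫⁻ y, K (Q x) (Q y) ∂μ ∂μ) = ∫⁻ x, ∫⁻ y, K x y ∂μ ∂μ := by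
      have := hsub (fun x => ∫⁻ y, K x (Q y) ∂μ)
      rw [this, h2]
    rw [hadd, h1, h2, h3]
    ring
  -- additivity of the iterated integral
  have haddK : ∀ K : EuclideanSpace ℝ (Fin N) → EuclideanSpace ℝ (Fin N) → ℝ≥0∞, Measurable (Function.uncurry K) →
      (∫⁻ x, ∫⁻ y, (K x y + K (Q x) y + K x (Q y) + K (Q x) (Q y)) ∂μ ∂μ)
        = (∫⁻ x, ∫⁻ y, K x y ∂μ ∂μ) + (∫⁻ x, ∫⁻ y, K (Q x) y ∂μ ∂μ)
          + (∫⁻ x, ∫⁻ y, K x (Q y) ∂μ ∂μ) + (∫⁻ x, ∫⁻ y, K (Q x) (Q y) ∂μ ∂μ) := by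
    intro K hK
    have hK1 : Measurable (Function.uncurry fun x y : EuclideanSpace ℝ (Fin N) => K (Q x) y) :=
      hK.comp ((hQmeas.comp measurable_fst).prodMk measurable_snd)
    have hK2 : Measurable (Function.uncurry fun x y : EuclideanSpace ℝ (Fin N) => K x (Q y)) :=
      hK.comp (measurable_fst.prodMk (hQmeas.comp measurable_snd))
    have hK3 : Measurable (Function.uncurry fun x y : EuclideanSpace ℝ (Fin N) => K (Q x) (Q y)) :=
      hK.comp ((hQmeas.comp measurable_fst).prodMk (hQmeas.comp measurable_snd))
    have hinner' : ∀ x : EuclideanSpace ℝ (Fin N), (∫⁻ y, (K x y + K (Q x) y + K x (Q y) + K (Q x) (Q y)) ∂μ)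
        = (∫⁻ y, K x y ∂μ) + (∫⁻ y, K (Q x) y ∂μ) + (∫⁻ y, K x (Q y) ∂μ)
          + (∫⁻ y, K (Q x) (Q y) ∂μ) := by
      intro x
      have m1 : Measurable fun y => K x y := hK.of_uncurry_left
      have m2 : Measurable fun y => K (Q x) y := hK.of_uncurry_left
      have m3 : Measurable fun y => K x (Q y) := m1.comp hQmeas
      have m4 : Measurable fun y => K (Q x) (Q y) := m2.comp hQmeas
      rw [lintegral_add_left (f := fun y => K x y + K (Q x) y + K x (Q y)) ((m1.add m2).add m3),
        lintegral_add_left (f := fun y => K x y + K (Q x) y) (m1.add m2),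
        lintegral_add_left m1]
    rw [lintegral_congr hinner']
    have M1 : Measurable fun x => ∫⁻ y, K x y ∂μ := hK.lintegral_prod_right
    have M2 : Measurable fun x => ∫⁻ y, K (Q x) y ∂μ := hK1.lintegral_prod_right
    have M3 : Measurable fun x => ∫⁻ y, K x (Q y) ∂μ := hK2.lintegral_prod_right
    have M4 : Measurable fun x => ∫⁻ y, K (Q x) (Q y) ∂μ := hK3.lintegral_prod_right
    rw [lintegral_add_left (f := fun x => ∫⁻ y, K x y ∂μ + ∫⁻ y, K (Q x) y ∂μ + ∫⁻ y, K x (Q y) ∂μ)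
        ((M1.add M2).add M3),
      lintegral_add_left (f := fun x => ∫⁻ y, K x y ∂μ + ∫⁻ y, K (Q x) y ∂μ) (M1.add M2),
      lintegral_add_left M1]
  -- pointwise facts
  have hfix : ∀ x : EuclideanSpace ℝ (Fin N), ⟪x, w₀⟫ = a → Q x = x := by
    intro x hx
    rw [hQ, hx]
    simp
  have hvzero : ∀ x : EuclideanSpace ℝ (Fin N), ⟪x, w₀⟫ = a → v x = 0 := by
    intro x hx
    have h1 := hvanti x
    rw [hfix x hx] at h1
    linarith
  have hwmem : ∀ x : EuclideanSpace ℝ (Fin N), a < ⟪x, w₀⟫ → w x = v x := fun x hx =>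
    indicator_of_mem ((hmem x).2 hx) v
  have hwnot : ∀ x : EuclideanSpace ℝ (Fin N), ¬ a < ⟪x, w₀⟫ → w x = 0 := fun x hx =>
    indicator_of_notMem (fun h => hx ((hmem x).1 h)) v
  -- termwise bounds when one of the values of v vanishes
  have hterm : ∀ p q : EuclideanSpace ℝ (Fin N), v q = 0 → G p q ≤ F p q := by
    intro p q hq
    have hwq : w q = 0 := by
      by_cases h : q ∈ H
      · rw [hwdef, indicator_of_mem h, hq]
      · rw [hwdef, indicator_of_notMem h]
    rw [hGdef, hFdef]
    simp only [hwq, hq, sub_zero]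
    apply ENNReal.ofReal_le_ofReal
    apply mul_le_mul_of_nonneg_right _ (hJnonneg _)
    by_cases h : p ∈ H
    · rw [hwdef, indicator_of_mem h]
    · rw [hwdef, indicator_of_notMem h]
      simpa using sq_nonneg (v p)
  have hterm' : ∀ p q : EuclideanSpace ℝ (Fin N), v p = 0 → G p q ≤ F p q := by
    intro p q hp
    have hwp : w p = 0 := by
      by_cases h : p ∈ H
      · rw [hwdef, indicator_of_mem h, hp]
      · rw [hwdef, indicator_of_notMem h]
    rw [hGdef, hFdef]
    have hs : ∀ t : ℝ, (0 - t)^2 = t^2 := fun t => by ring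
    simp only [hwp, hp]
    rw [hs, hs]
    apply ENNReal.ofReal_le_ofReal
    apply mul_le_mul_of_nonneg_right _ (hJnonneg _)
    by_cases h : q ∈ H
    · rw [hwdef, indicator_of_mem h]
    · rw [hwdef, indicator_of_notMem h]
      simpa using sq_nonneg (v q)
  -- the key pointwise inequality, first when both points are weakly on the H-side
  have key : ∀ x y : EuclideanSpace ℝ (Fin N), a ≤ ⟪x, w₀⟫ → a ≤ ⟪y, w₀⟫ →
      G x y + G (Q x) y + G x (Q y) + G (Q x) (Q y)
        ≤ F x y + F (Q x) y + F x (Q y) + F (Q x) (Q y) := by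
    intro x y hx hy
    rcases eq_or_lt_of_le hx with hxa | hxa
    · -- v x = 0, v (Q x) = 0 : termwise
      have h1 : v x = 0 := hvzero x hxa.symm
      have h2 : v (Q x) = 0 := by rw [hvanti, h1, neg_zero]
      exact add_le_add (add_le_add (add_le_add (hterm' x y h1) (hterm' (Q x) y h2))
        (hterm' x (Q y) h1)) (hterm' (Q x) (Q y) h2)
    rcases eq_or_lt_of_le hy with hya | hya
    · have h1 : v y = 0 := hvzero y hya.symm
      have h2 : v (Q y) = 0 := by rw [hvanti, h1, neg_zero]
      exact add_le_add (add_le_add (add_le_add (hterm x y h1) (hterm (Q x) y h1))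
        (hterm x (Q y) h2)) (hterm (Q x) (Q y) h2)
    -- main case : x, y ∈ H
    have hxH : x ∈ H := (hmem x).2 hxa
    have hyH : y ∈ H := (hmem y).2 hya
    have hQx : ¬ a < ⟪Q x, w₀⟫ := by rw [hinner]; linarith
    have hQy : ¬ a < ⟪Q y, w₀⟫ := by rw [hinner]; linarith
    have hwx : w x = v x := hwmem x hxa
    have hwy : w y = v y := hwmem y hya
    have hwQx : w (Q x) = 0 := hwnot _ hQx
    have hwQy : w (Q y) = 0 := hwnot _ hQy
    have hvQx : v (Q x) = -v x := hvanti x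
    have hvQy : v (Q y) = -v y := hvanti y
    have hβ : J (x - Q y) ≤ J (x - y) := hJmono x hxH y hyH
    have hγ : J (Q x - y) ≤ J (x - y) := by
      have h1 : J (Q x - y) = J (y - Q x) := by rw [← hJeven (y - Q x), neg_sub]
      have h2 : J (x - y) = J (y - x) := by rw [← hJeven (y - x), neg_sub]
      rw [h1, h2]
      exact hJmono y hyH x hxH
    have hQxy : J (Q x - Q y) = J (x - y) := hJQ x y
    rw [hGdef, hFdef]
    simp only [hwx, hwy, hwQx, hwQy, hvQx, hvQy, hQxy]
    have e1 : (0 - v y) ^ 2 = v y ^ 2 := by ring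
    have e2 : (v x - 0) ^ 2 = v x ^ 2 := by ring
    have e3 : ((0:ℝ) - 0) ^ 2 = 0 := by ring
    have e4 : (-v x - v y) ^ 2 = (v x + v y) ^ 2 := by ring
    have e5 : (v x - -v y) ^ 2 = (v x + v y) ^ 2 := by ring
    have e6 : (-v x - -v y) ^ 2 = (v x - v y) ^ 2 := by ring
    rw [e1, e2, e3, e4, e5, e6, zero_mul]
    have hterm0 : ENNReal.ofReal (0:ℝ) = 0 := ENNReal.ofReal_zero
    rw [hterm0]
    have hJα := hJnonneg (x - y)
    have hJβ := hJnonneg (x - Q y)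
    have hJγ := hJnonneg (Q x - y)
    calc ENNReal.ofReal ((v x - v y) ^ 2 * J (x - y)) + ENNReal.ofReal (v y ^ 2 * J (Q x - y))
          + ENNReal.ofReal (v x ^ 2 * J (x - Q y)) + 0
        = ENNReal.ofReal ((v x - v y) ^ 2 * J (x - y)) + ENNReal.ofReal (v y ^ 2 * J (Q x - y))
          + ENNReal.ofReal (v x ^ 2 * J (x - Q y)) + ENNReal.ofReal 0 := by
          rw [ENNReal.ofReal_zero]
      _ ≤ ENNReal.ofReal ((v x - v y) ^ 2 * J (x - y))
          + ENNReal.ofReal ((v x + v y) ^ 2 * J (Q x - y))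
          + ENNReal.ofReal ((v x + v y) ^ 2 * J (x - Q y))
          + ENNReal.ofReal ((v x - v y) ^ 2 * J (x - y)) := by
          apply ofReal_add4_le (by positivity) (by positivity) (by positivity) le_rfl
          · have := core_ineq (J (x - y)) (J (x - Q y)) (J (Q x - y)) (v x) (v y) hJβ hJγ hβ hγ
            linarith
          all_goals positivity
  -- symmetrized claim in full generality
  have hpt : ∀ x y : EuclideanSpace ℝ (Fin N), G x y + G (Q x) y + G x (Q y) + G (Q x) (Q y)
      ≤ F x y + F (Q x) y + F x (Q y) + F (Q x) (Q y) := by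
    have key2 : ∀ x y : EuclideanSpace ℝ (Fin N), a ≤ ⟪x, w₀⟫ →
        G x y + G (Q x) y + G x (Q y) + G (Q x) (Q y)
          ≤ F x y + F (Q x) y + F x (Q y) + F (Q x) (Q y) := by
      intro x y hx
      rcases le_or_gt a ⟪y, w₀⟫ with hy | hy
      · exact key x y hx hy
      · have hy' : a ≤ ⟪Q y, w₀⟫ := by rw [hinner]; linarith
        have h := key x (Q y) hx hy'
        rw [hQQ y] at h
        have eG : G x y + G (Q x) y + G x (Q y) + G (Q x) (Q y)
            = G x (Q y) + G (Q x) (Q y) + G x y + G (Q x) y := by ring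
        have eF : F x y + F (Q x) y + F x (Q y) + F (Q x) (Q y)
            = F x (Q y) + F (Q x) (Q y) + F x y + F (Q x) y := by ring
        rw [eG, eF]
        exact h
    intro x y
    rcases le_or_gt a ⟪x, w₀⟫ with hx | hx
    · exact key2 x y hx
    · have hx' : a ≤ ⟪Q x, w₀⟫ := by rw [hinner]; linarith
      have h := key2 (Q x) y hx'
      rw [hQQ x] at h
      have eG : G x y + G (Q x) y + G x (Q y) + G (Q x) (Q y)
          = G (Q x) y + G x y + G (Q x) (Q y) + G x (Q y) := by ring
      have eF : F x y + F (Q x) y + F x (Q y) + F (Q x) (Q y)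
          = F (Q x) y + F x y + F (Q x) (Q y) + F x (Q y) := by ring
      rw [eG, eF]
      exact h
  -- putting everything together
  have hrhoG : rho N J U' w = ∫⁻ x, ∫⁻ y, G x y ∂μ ∂μ := rfl
  have hrhoF : rho N J U' v = ∫⁻ x, ∫⁻ y, F x y ∂μ ∂μ := rfl
  have h4G : (∫⁻ x, ∫⁻ y, (G x y + G (Q x) y + G x (Q y) + G (Q x) (Q y)) ∂μ ∂μ)
      = 4 * ∫⁻ x, ∫⁻ y, G x y ∂μ ∂μ := hsubst G (haddK G hGm) hGm
  have h4F : (∫⁻ x, ∫⁻ y, (F x y + F (Q x) y + F x (Q y) + F (Q x) (Q y)) ∂μ ∂μ)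
      = 4 * ∫⁻ x, ∫⁻ y, F x y ∂μ ∂μ := hsubst F (haddK F hFm) hFm
  have hmono : (∫⁻ x, ∫⁻ y, (G x y + G (Q x) y + G x (Q y) + G (Q x) (Q y)) ∂μ ∂μ)
      ≤ ∫⁻ x, ∫⁻ y, (F x y + F (Q x) y + F x (Q y) + F (Q x) (Q y)) ∂μ ∂μ :=
    lintegral_mono fun x => lintegral_mono fun y => hpt x y
  rw [h4G, h4F] at hmono
  rw [hrhoG, hrhoF]
  exact (ENNReal.mul_le_mul_iff_right (by norm_num) (by norm_num)).mp hmono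

/-- For an antisymmetric function `v`, the energy of `1_H · v` is dominated by the
energy of `v` on a reflection-symmetric set `U′`. -/
theorem rho_indicator_le
    (N : ℕ)
    (w₀ : EuclideanSpace ℝ (Fin N)) (a : ℝ) (hw₀ : ‖w₀‖ = 1)
    (H : Set (EuclideanSpace ℝ (Fin N)))
    (hH : H = {x | a < ⟪x, w₀⟫})
    (Q : EuclideanSpace ℝ (Fin N) → EuclideanSpace ℝ (Fin N))
    (hQ : ∀ x, Q x = x + (2 * (a - ⟪x, w₀⟫)) • w₀)
    (J : EuclideanSpace ℝ (Fin N) → ℝ)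
    (hJmeas : Measurable J) (hJnonneg : ∀ z, 0 ≤ J z)
    (hJeven : ∀ z, J (-z) = J z)
    (hJQ : ∀ x y, J (Q x - Q y) = J (x - y))
    (hJmono : ∀ x ∈ H, ∀ y ∈ H, J (x - Q y) ≤ J (x - y))
    (U' : Set (EuclideanSpace ℝ (Fin N))) (hU'o : IsOpen U')
    (hU'sym : Q '' U' = U')
    (v : EuclideanSpace ℝ (Fin N) → ℝ)
    (hvL2 : MemLp v 2 volume)
    (hvanti : ∀ x, v (Q x) = -v x)
    (hρv : rho N J U' v < ⊤) :
    rho N J U' (H.indicator v) ≤ rho N J U' v := by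
  have hinner : ∀ x, ⟪Q x, w₀⟫ = 2*a - ⟪x, w₀⟫ := by
    intro x
    rw [hQ, inner_add_left, real_inner_smul_left, real_inner_self_eq_norm_mul_norm, hw₀]
    ring
  have hQQ : ∀ x, Q (Q x) = x := by
    intro x
    rw [hQ (Q x), hinner, hQ x]
    module
  have hQeq : Q = (fun y => y + (2*a) • w₀) ∘
      ((Submodule.reflection (ℝ ∙ w₀)).trans (LinearIsometryEquiv.neg ℝ (E := EuclideanSpace ℝ (Fin N)))) := by
    funext x
    simp only [Function.comp_apply, LinearIsometryEquiv.trans_apply]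
    rw [show (LinearIsometryEquiv.neg ℝ (E := EuclideanSpace ℝ (Fin N)))
        ((Submodule.reflection (ℝ ∙ w₀)) x) = -((Submodule.reflection (ℝ ∙ w₀)) x) from rfl,
      Submodule.reflection_apply, Submodule.starProjection_unit_singleton ℝ hw₀, hQ, real_inner_comm]
    module
  have hQmp : MeasurePreserving Q volume volume := by
    rw [hQeq]
    exact (measurePreserving_add_right volume _).comp
      (LinearIsometryEquiv.measurePreserving _)
  have hQmeas : Measurable Q := hQmp.measurable
  -- replace v by a measurable, everywhere antisymmetric representative
  have hvae : AEMeasurable v volume := hvL2.aestronglyMeasurable.aemeasurable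
  set v₀ : EuclideanSpace ℝ (Fin N) → ℝ := hvae.mk v with hv₀def
  have hv₀meas : Measurable v₀ := hvae.measurable_mk
  have hv₀ae : v =ᵐ[volume] v₀ := hvae.ae_eq_mk
  set v₁ : EuclideanSpace ℝ (Fin N) → ℝ := fun x => (v₀ x - v₀ (Q x)) / 2 with hv₁def
  have hv₁meas : Measurable v₁ := ((hv₀meas.sub (hv₀meas.comp hQmeas))).div_const 2
  have hv₁anti : ∀ x, v₁ (Q x) = -v₁ x := by
    intro x
    simp only [hv₁def, hQQ]
    ring
  have hv₁ae : v₁ =ᵐ[volume] v := by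
    have hcomp : (fun x => v₀ (Q x)) =ᵐ[volume] fun x => v (Q x) :=
      hQmp.quasiMeasurePreserving.ae_eq hv₀ae.symm
    filter_upwards [hv₀ae, hcomp] with x h1 h2
    simp only [hv₁def]
    rw [h2, hvanti, ← h1]
    ring
  have hind : H.indicator v₁ =ᵐ[volume] H.indicator v := by
    filter_upwards [hv₁ae] with x hx
    by_cases h : x ∈ H
    · rw [indicator_of_mem h, indicator_of_mem h, hx]
    · rw [indicator_of_notMem h, indicator_of_notMem h]
  calc rho N J U' (H.indicator v) = rho N J U' (H.indicator v₁) :=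
        (rho_congr_ae N J U' hind).symm
    _ ≤ rho N J U' v₁ :=
        rho_indicator_le_aux N w₀ a hw₀ H hH Q hQ hQQ hQmeas hQmp J hJmeas hJnonneg hJeven
          hJQ hJmono U' hU'o hU'sym v₁ hv₁meas hv₁anti
    _ = rho N J U' v := rho_congr_ae N J U' hv₁ae
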